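/- arXiv:2009.03634 — 2 statements merged into one kernel-verified Lean document; each statement's English description precedes it below -/
import Mathlib

section
/- Let m = 2. For every 1-lookahead equilibrium σ of the sequential scheduling game, the makespan of σ is at most 2·OPT (the sequential price of anarchy for two unrelated machines with 1-lookahead players is at most 2). -/
/-!
Sequential scheduling game on two unrelated machines, 1-lookahead players.
Machines are indexed by `Fin 2` (index `0` is machine 1, index `1` is machine 2),
jobs are `1, …, n`, and `p i j` is the processing time of job `j` on machine `i`.
-/

/-- `mload p σ i ℓ`: load of machine `i` after the first `ℓ` jobs under schedule `σ`. -/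
def mload (p : Fin 2 → ℕ → ℝ) (σ : ℕ → Fin 2) (i : Fin 2) (ℓ : ℕ) : ℝ :=
  ∑ j ∈ Finset.Icc 1 ℓ, if σ j = i then p i j else 0

/-- `Evec p σ j i i'`: the load vector `D(j-1)` with `p i j` added to coordinate `i`,
evaluated at coordinate `i'`. -/
def Evec (p : Fin 2 → ℕ → ℝ) (σ : ℕ → Fin 2) (j : ℕ) (i i' : Fin 2) : ℝ :=
  mload p σ i' (j - 1) + if i' = i then p i j else 0

/-- Anticipated cost of job `j` for choosing machine `i`, given predicted responses `r`. -/
def acost (p : Fin 2 → ℕ → ℝ) (σ : ℕ → Fin 2) (r : ℕ → Fin 2 → Fin 2) (j : ℕ) (i : Fin 2) :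
    ℝ :=
  Evec p σ j i i + if r j i = i then p i (j + 1) else 0

/-- `σ` is a 1-lookahead equilibrium for jobs `1, …, n` on two machines:
there are predicted responses `r j i` (an argmin of the follower's cost), each job
`j < n` minimizes its anticipated cost, and the last job `n` minimizes its actual cost. -/
def OneLookEq (n : ℕ) (p : Fin 2 → ℕ → ℝ) (σ : ℕ → Fin 2) : Prop :=
  ∃ r : ℕ → Fin 2 → Fin 2,
    (∀ j, 1 ≤ j → j < n →
      (∀ i i' : Fin 2,
        Evec p σ j i (r j i) + p (r j i) (j + 1) ≤ Evec p σ j i i' + p i' (j + 1)) ∧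
      (∀ i : Fin 2, acost p σ r j (σ j) ≤ acost p σ r j i)) ∧
    (1 ≤ n → ∀ i : Fin 2, mload p σ (σ n) (n - 1) + p (σ n) n ≤ mload p σ i (n - 1) + p i n)


/-- Makespan of an arbitrary schedule `τ` of jobs `1, …, n` on two machines. -/
def makespan2 (n : ℕ) (p : Fin 2 → ℕ → ℝ) (τ : ℕ → Fin 2) : ℝ :=
  max (mload p τ 0 n) (mload p τ 1 n)

/-- Optimal (minimum) makespan over all schedules. -/
noncomputable def OPT2 (n : ℕ) (p : Fin 2 → ℕ → ℝ) : ℝ :=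
  sInf {x | ∃ τ : ℕ → Fin 2, x = makespan2 n p τ}

def minsum (p : Fin 2 → ℕ → ℝ) (ℓ : ℕ) : ℝ :=
  ∑ j ∈ Finset.Icc 1 ℓ, min (p 0 j) (p 1 j)

lemma fin2 (x : Fin 2) : x = 0 ∨ x = 1 := by revert x; decide

lemma mload_zero (p : Fin 2 → ℕ → ℝ) (σ : ℕ → Fin 2) (i : Fin 2) : mload p σ i 0 = 0 := by
  simp [mload]

lemma mload_succ (p : Fin 2 → ℕ → ℝ) (σ : ℕ → Fin 2) (i : Fin 2) (ℓ : ℕ) :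
    mload p σ i (ℓ+1) = mload p σ i ℓ + if σ (ℓ+1) = i then p i (ℓ+1) else 0 := by
  unfold mload
  rw [Finset.sum_Icc_succ_top (by omega)]

lemma minsum_zero (p : Fin 2 → ℕ → ℝ) : minsum p 0 = 0 := by simp [minsum]

lemma minsum_succ (p : Fin 2 → ℕ → ℝ) (ℓ : ℕ) :
    minsum p (ℓ+1) = minsum p ℓ + min (p 0 (ℓ+1)) (p 1 (ℓ+1)) := by
  unfold minsum
  rw [Finset.sum_Icc_succ_top (by omega)]

set_option maxHeartbeats 2000000 in
lemma key (n : ℕ) (p : Fin 2 → ℕ → ℝ) (hp : ∀ i j, 0 ≤ p i j) (σ : ℕ → Fin 2)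
    (r : ℕ → Fin 2 → Fin 2)
    (hr : ∀ j, 1 ≤ j → j < n →
      (∀ i i' : Fin 2,
        Evec p σ j i (r j i) + p (r j i) (j + 1) ≤ Evec p σ j i i' + p i' (j + 1)) ∧
      (∀ i : Fin 2, acost p σ r j (σ j) ≤ acost p σ r j i)) :
    ∀ ℓ, ℓ < n →
      (∀ i, mload p σ i ℓ ≤ minsum p ℓ + min (p 0 (ℓ+1)) (p 1 (ℓ+1))) ∧
      min (mload p σ 0 ℓ + p 0 (ℓ+1)) (mload p σ 1 ℓ + p 1 (ℓ+1)) ≤ minsum p (ℓ+1) := by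
  intro ℓ
  induction ℓ with
  | zero =>
    intro _
    constructor
    · intro i
      rw [mload_zero, minsum_zero]
      have := le_min (hp 0 1) (hp 1 1)
      linarith
    · rw [mload_zero, mload_zero, minsum_succ, minsum_zero]
      simp
  | succ ℓ ih =>
    intro hlt
    obtain ⟨ihb, iha⟩ := ih (by omega)
    obtain ⟨hresp, hchoice⟩ := hr (ℓ+1) (by omega) hlt
    simp only [Evec, acost, Nat.add_sub_cancel] at hresp hchoice
    have A := hresp 0 0
    have B := hresp 0 1
    have C := hresp 1 0
    have E := hresp 1 1
    have F := hchoice 0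
    have G := hchoice 1
    have hb0 := ihb 0
    have hb1 := ihb 1
    have ms1 := minsum_succ p ℓ
    have ms2 := minsum_succ p (ℓ+1)
    have hp00 := hp 0 (ℓ+1); have hp10 := hp 1 (ℓ+1)
    have hp01 := hp 0 (ℓ+1+1); have hp11 := hp 1 (ℓ+1+1)
    have n01 : ¬((0:Fin 2) = 1) := by decide
    have n10 : ¬((1:Fin 2) = 0) := by decide
    rcases min_cases (p 0 (ℓ+1)) (p 1 (ℓ+1)) with ⟨hPe, hPl⟩ | ⟨hPe, hPl⟩ <;>
    rcases min_cases (p 0 (ℓ+1+1)) (p 1 (ℓ+1+1)) with ⟨hQe, hQl⟩ | ⟨hQe, hQl⟩ <;>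
    rcases min_cases (mload p σ 0 ℓ + p 0 (ℓ+1)) (mload p σ 1 ℓ + p 1 (ℓ+1)) with ⟨hme, hml⟩ | ⟨hme, hml⟩ <;>
    rcases fin2 (σ (ℓ+1)) with hs | hs <;>
    rw [hs] at F G <;>
    rcases fin2 (r (ℓ+1) 0) with hr0 | hr0 <;>
    rcases fin2 (r (ℓ+1) 1) with hr1 | hr1 <;>
    simp only [hr0, hr1, n01, n10, eq_self_iff_true, if_true, if_false] at A B C E F G <;>
    constructor <;>
    first
      | (intro i <;> rcases fin2 i with hi | hi <;> subst hi <;> rw [mload_succ, hs] <;> simp only [n01, n10, eq_self_iff_true, if_true, if_false] <;> linarith [A, B, C, E, F, G, hb0, hb1, iha, ms1, ms2, hPe, hQe, hme])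
      | (refine min_le_iff.mpr ?_ <;> rw [mload_succ, mload_succ, hs] <;> simp only [n01, n10, eq_self_iff_true, if_true, if_false] <;> first | (left <;> linarith [A, B, C, E, F, G, hb0, hb1, iha, ms1, ms2, hPe, hQe, hme]) | (right <;> linarith [A, B, C, E, F, G, hb0, hb1, iha, ms1, ms2, hPe, hQe, hme]))


lemma mload_nonneg (p : Fin 2 → ℕ → ℝ) (hp : ∀ i j, 0 ≤ p i j) (σ : ℕ → Fin 2)
    (i : Fin 2) (ℓ : ℕ) : 0 ≤ mload p σ i ℓ := by
  apply Finset.sum_nonneg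
  intro j _
  split <;> [exact hp i j; exact le_rfl]

lemma makespan_le_minsum (n : ℕ) (p : Fin 2 → ℕ → ℝ) (hp : ∀ i j, 0 ≤ p i j)
    (σ : ℕ → Fin 2) (hσ : OneLookEq n p σ) :
    makespan2 n p σ ≤ minsum p n := by
  obtain ⟨r, hmid, hlast⟩ := hσ
  rcases Nat.eq_zero_or_pos n with hn | hn
  · subst hn
    simp [makespan2, mload_zero, minsum_zero]
  · obtain ⟨m, rfl⟩ : ∃ m, n = m + 1 := ⟨n - 1, by omega⟩
    obtain ⟨hb, ha⟩ := key (m+1) p hp σ r hmid m (by omega)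
    have hl := hlast (by omega)
    simp only [Nat.add_sub_cancel] at hl
    have key2 : ∀ i, mload p σ i (m+1) ≤ minsum p (m+1) := by
      intro i
      rw [mload_succ]
      by_cases hi : σ (m+1) = i
      · rw [if_pos hi, ← hi]
        have h0 := hl 0
        have h1 := hl 1
        rcases min_cases (mload p σ 0 m + p 0 (m+1)) (mload p σ 1 m + p 1 (m+1)) with
          ⟨he, _⟩ | ⟨he, _⟩ <;> linarith
      · rw [if_neg hi]
        have h := hb i
        have ms := minsum_succ p m
        linarith
    exact max_le (key2 0) (key2 1)

lemma minsum_le_two_makespan (n : ℕ) (p : Fin 2 → ℕ → ℝ) (τ : ℕ → Fin 2) :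
    minsum p n ≤ 2 * makespan2 n p τ := by
  have hsum : minsum p n ≤ mload p τ 0 n + mload p τ 1 n := by
    unfold minsum mload
    rw [← Finset.sum_add_distrib]
    apply Finset.sum_le_sum
    intro j _
    have n01 : ¬((0:Fin 2) = 1) := by decide
    have n10 : ¬((1:Fin 2) = 0) := by decide
    rcases fin2 (τ j) with h | h <;> rw [h] <;>
      simp only [n01, n10, eq_self_iff_true, if_true, if_false] <;>
      [(rw [add_zero]; exact min_le_left _ _); (rw [zero_add]; exact min_le_right _ _)]
  have h0 : mload p τ 0 n ≤ makespan2 n p τ := le_max_left _ _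
  have h1 : mload p τ 1 n ≤ makespan2 n p τ := le_max_right _ _
  linarith

/-- For `m = 2`, every 1-lookahead equilibrium has makespan at most
`2 · OPT`: the sequential price of anarchy for 1-lookahead players on two unrelated
machines is at most `2`. -/
theorem spoa_oneLookahead_two_machines_le_two
    (n : ℕ) (p : Fin 2 → ℕ → ℝ) (hp : ∀ i j, 0 ≤ p i j)
    (σ : ℕ → Fin 2) (hσ : OneLookEq n p σ) :
    makespan2 n p σ ≤ 2 * OPT2 n p := by
  have hms := makespan_le_minsum n p hp σ hσ
  have hne : {x | ∃ τ : ℕ → Fin 2, x = makespan2 n p τ}.Nonempty :=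
    ⟨makespan2 n p σ, σ, rfl⟩
  have hinf : makespan2 n p σ / 2 ≤ OPT2 n p := by
    apply le_csInf hne
    rintro b ⟨τ, rfl⟩
    have := minsum_le_two_makespan n p τ
    linarith
  linarith
end

section
/- In the sequential scheduling game on m unrelated machines where players have k-lookahead, ΔL([1:n]) ≤ Σ_{j=1}^n p_j + Σ_{j=1}^n ΔL(K_j); that is, the maximum possible increase of the makespan caused by all n jobs (over all initial loads and all k-lookahead plays) is at most the total minimum processing time of all jobs plus the sum over all jobs j of the maximum makespan increase caused by the lookahead set K_j playing alone. -/
/-!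
Sequential scheduling game on `m` unrelated machines with `k`-lookahead players.
Machines are indexed by `Fin m`, jobs by natural numbers (a block `[a:b]` of jobs plays
in the order `a, a+1, …, b`), and `p i j` is the processing time of job `j` on machine `i`.
-/

/-- Add the processing time of job `j` on machine `i` to the load vector `D`. -/
def bump {m : ℕ} (p : Fin m → ℕ → ℝ) (D : Fin m → ℝ) (i : Fin m) (j : ℕ) : Fin m → ℝ :=
  fun i' => D i' + if i' = i then p i j else 0

/-- `Out p D js F`: `F` is the final load vector of some backward-induction
(subgame-perfect, ties broken arbitrarily) play of the finite extensive game in which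
the jobs in `js` choose machines in order, starting from loads `D`; the payoff of each
job is the load, after all of these moves, of the machine it chose. -/
inductive Out {m : ℕ} (p : Fin m → ℕ → ℝ) : (Fin m → ℝ) → List ℕ → (Fin m → ℝ) → Prop
  | nil (D : Fin m → ℝ) : Out p D [] D
  | cons (D : Fin m → ℝ) (j : ℕ) (js : List ℕ) (i : Fin m) (cont : Fin m → Fin m → ℝ)
      (hcont : ∀ i', Out p (bump p D i' j) js (cont i'))
      (hopt : ∀ i', cont i i ≤ cont i' i') :
      Out p D (j :: js) (cont i)

/-- `i` is an optimal root move, for the root job `j` followed by the jobs `js`,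
of the lookahead game starting from loads `D`, solved by backward induction
(ties broken arbitrarily). -/
def RootMove {m : ℕ} (p : Fin m → ℕ → ℝ) (D : Fin m → ℝ) (j : ℕ) (js : List ℕ)
    (i : Fin m) : Prop :=
  ∃ cont : Fin m → Fin m → ℝ,
    (∀ i', Out p (bump p D i' j) js (cont i')) ∧ (∀ i', cont i i ≤ cont i' i')

/-- `Play p k D a b F`: starting from initial loads `D`, the block `[a:b]` of jobs plays a
`k`-lookahead play resulting in final loads `F`: the first remaining job `a` makes an
optimal root move of the lookahead game on jobs `a, a+1, …, min (a+k) b`, its processing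
time is added to the chosen machine, and the remaining jobs continue. -/
inductive Play {m : ℕ} (p : Fin m → ℕ → ℝ) (k : ℕ) :
    (Fin m → ℝ) → ℕ → ℕ → (Fin m → ℝ) → Prop
  | nil (D : Fin m → ℝ) (a b : ℕ) (h : b < a) : Play p k D a b D
  | cons (D : Fin m → ℝ) (a b : ℕ) (i : Fin m) (F : Fin m → ℝ) (hab : a ≤ b)
      (hroot : RootMove p D a (List.range' (a + 1) (min (a + k) b - a)) i)
      (hplay : Play p k (bump p D i a) (a + 1) b F) :
      Play p k D a b F

/-- Maximum load of a load vector. -/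
noncomputable def maxLoad {m : ℕ} (D : Fin m → ℝ) : ℝ := ⨆ i, D i

/-- `ΔL([a:b])`: the maximum possible increase of the makespan caused by the block
`[a:b]` of jobs, over all nonnegative initial loads and all `k`-lookahead plays. -/
noncomputable def deltaL {m : ℕ} (p : Fin m → ℕ → ℝ) (k a b : ℕ) : ℝ :=
  sSup {x | ∃ D F : Fin m → ℝ,
    (∀ i, 0 ≤ D i) ∧ Play p k D a b F ∧ x = maxLoad F - maxLoad D}

/-- Minimum processing time of job `j`. -/
noncomputable def pmin {m : ℕ} (p : Fin m → ℕ → ℝ) (j : ℕ) : ℝ := ⨅ i, p i j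

section Aux
variable {m : ℕ} {p : Fin m → ℕ → ℝ}

lemma le_maxLoad [Nonempty (Fin m)] (D : Fin m → ℝ) (i : Fin m) : D i ≤ maxLoad D :=
  le_ciSup (Set.Finite.bddAbove (Set.finite_range D)) i

lemma maxLoad_le [Nonempty (Fin m)] {D : Fin m → ℝ} {c : ℝ} (h : ∀ i, D i ≤ c) :
    maxLoad D ≤ c := ciSup_le h

lemma le_bump (hp : ∀ i j, 0 ≤ p i j) (D : Fin m → ℝ) (i : Fin m) (j : ℕ) (i' : Fin m) :
    D i' ≤ bump p D i j i' := by
  unfold bump; split <;> simp [hp]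

lemma maxLoad_bump_le [Nonempty (Fin m)] (hp : ∀ i j, 0 ≤ p i j) (D : Fin m → ℝ)
    (i : Fin m) (j : ℕ) {c : ℝ} (hc : p i j ≤ c) (hc0 : 0 ≤ c) :
    maxLoad (bump p D i j) ≤ maxLoad D + c := by
  refine maxLoad_le fun i' => ?_
  unfold bump
  split
  · exact add_le_add (le_maxLoad D i') hc
  · simpa using add_le_add (le_maxLoad D i') hc0

lemma out_mono (hp : ∀ i j, 0 ≤ p i j) {D F : Fin m → ℝ} {js : List ℕ}
    (h : Out p D js F) : ∀ i', D i' ≤ F i' := by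
  induction h with
  | nil D => exact fun _ => le_rfl
  | cons D j js i cont hcont hopt ih =>
    exact fun i' => (le_bump hp D i j i').trans (ih i i')

lemma out_exists [Nonempty (Fin m)] (p : Fin m → ℕ → ℝ) :
    ∀ (js : List ℕ) (D : Fin m → ℝ), ∃ F, Out p D js F := by
  intro js
  induction js with
  | nil => exact fun D => ⟨D, Out.nil D⟩
  | cons j js ih =>
    intro D
    choose cont hcont using fun i' => ih (bump p D i' j)
    obtain ⟨i, hi⟩ := Finite.exists_min (fun i' => cont i' i')
    exact ⟨cont i, Out.cons D j js i cont hcont hi⟩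

lemma rootMove_exists [Nonempty (Fin m)] (p : Fin m → ℕ → ℝ) (D : Fin m → ℝ)
    (j : ℕ) (js : List ℕ) : ∃ i, RootMove p D j js i := by
  choose cont hcont using fun i' => out_exists p js (bump p D i' j)
  obtain ⟨i, hi⟩ := Finite.exists_min (fun i' => cont i' i')
  exact ⟨i, cont, hcont, hi⟩

lemma play_exists_aux [Nonempty (Fin m)] (p : Fin m → ℕ → ℝ) (k : ℕ) :
    ∀ (N a b : ℕ), b + 1 - a ≤ N → ∀ D : Fin m → ℝ, ∃ F, Play p k D a b F := by
  intro N
  induction N with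
  | zero =>
    intro a b h D
    refine ⟨D, Play.nil D a b ?_⟩; omega
  | succ N ih =>
    intro a b h D
    rcases lt_or_ge b a with hba | hab
    · exact ⟨D, Play.nil D a b hba⟩
    · obtain ⟨i, hi⟩ := rootMove_exists p D a (List.range' (a + 1) (min (a + k) b - a))
      obtain ⟨F, hF⟩ := ih (a + 1) b (by omega) (bump p D i a)
      exact ⟨F, Play.cons D a b i F hab hi hF⟩

lemma play_exists [Nonempty (Fin m)] (p : Fin m → ℕ → ℝ) (k a b : ℕ) (D : Fin m → ℝ) :
    ∃ F, Play p k D a b F := play_exists_aux p k (b + 1 - a) a b le_rfl D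

lemma play_mono (hp : ∀ i j, 0 ≤ p i j) {k : ℕ} {D F : Fin m → ℝ} {a b : ℕ}
    (h : Play p k D a b F) : ∀ i', D i' ≤ F i' := by
  induction h with
  | nil D a b h => exact fun _ => le_rfl
  | cons D a b i F hab hroot hplay ih =>
    exact fun i' => (le_bump hp D i a i').trans (ih i')

lemma play_bound [Nonempty (Fin m)] (hp : ∀ i j, 0 ≤ p i j) {k : ℕ}
    {D F : Fin m → ℝ} {a b : ℕ} (h : Play p k D a b F) :
    maxLoad F ≤ maxLoad D + ∑ j ∈ Finset.Icc a b, (⨆ i, p i j) := by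
  induction h with
  | nil D a b h =>
    rw [Finset.Icc_eq_empty (by omega)]; simp
  | cons D a b i F hab hroot hplay ih =>
    have hsplit : ∑ j ∈ Finset.Icc a b, (⨆ i, p i j)
        = (⨆ i', p i' a) + ∑ j ∈ Finset.Icc (a + 1) b, (⨆ i, p i j) := by
      rw [Finset.Icc_eq_cons_Ioc hab, Finset.sum_cons, ← Finset.Icc_add_one_left_eq_Ioc]
    have h1 : maxLoad (bump p D i a) ≤ maxLoad D + ⨆ i', p i' a :=
      maxLoad_bump_le hp D i a
        (le_ciSup (f := fun i' => p i' a) (Set.Finite.bddAbove (Set.finite_range _)) i)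
        (Real.iSup_nonneg fun i' => hp i' a)
    calc maxLoad F ≤ maxLoad (bump p D i a) + ∑ j ∈ Finset.Icc (a + 1) b, (⨆ i, p i j) := ih
      _ ≤ maxLoad D + (⨆ i', p i' a) + ∑ j ∈ Finset.Icc (a + 1) b, (⨆ i, p i j) := by
          linarith
      _ = _ := by rw [hsplit]; ring

lemma deltaL_bddAbove [Nonempty (Fin m)] (hp : ∀ i j, 0 ≤ p i j) (k a b : ℕ) :
    BddAbove {x | ∃ D F : Fin m → ℝ,
      (∀ i, 0 ≤ D i) ∧ Play p k D a b F ∧ x = maxLoad F - maxLoad D} := by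
  refine ⟨∑ j ∈ Finset.Icc a b, (⨆ i, p i j), ?_⟩
  rintro x ⟨D, F, hD, hP, rfl⟩
  have := play_bound hp hP
  linarith

lemma deltaL_nonneg [Nonempty (Fin m)] (hp : ∀ i j, 0 ≤ p i j) (k a b : ℕ) :
    0 ≤ deltaL p k a b := by
  obtain ⟨F, hF⟩ := play_exists p k a b (fun _ => (0 : ℝ))
  have h0 : maxLoad (fun _ : Fin m => (0 : ℝ)) = 0 := ciSup_const
  have hx : (0 : ℝ) ≤ maxLoad F - maxLoad (fun _ : Fin m => (0 : ℝ)) := by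
    rw [h0, sub_zero]
    exact le_trans (play_mono hp hF (Classical.arbitrary _)) (le_maxLoad F _)
  refine hx.trans (le_csSup (deltaL_bddAbove hp k a b) ?_)
  exact ⟨_, F, fun _ => le_rfl, hF, rfl⟩

lemma pmin_nonneg (hp : ∀ i j, 0 ≤ p i j) (j : ℕ) : 0 ≤ pmin p j :=
  Real.iInf_nonneg fun i => hp i j

lemma out_to_play {k : ℕ} :
    ∀ (L a b : ℕ) (D F : Fin m → ℝ), b ≤ a + k → L = b + 1 - a →
      Out p D (List.range' a L) F → Play p k D a b F := by
  intro L
  induction L with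
  | zero =>
    intro a b D F hbk hL hout
    cases hout
    exact Play.nil D a b (by omega)
  | succ L ih =>
    intro a b D F hbk hL hout
    rw [List.range'_succ] at hout
    have hab : a ≤ b := by omega
    cases hout with
    | cons _ _ _ i cont hcont hopt =>
      have hmin : min (a + k) b - a = L := by omega
      refine Play.cons D a b i (cont i) hab ⟨cont, by rw [hmin]; exact hcont, hopt⟩ ?_
      exact ih (a + 1) b _ _ (by omega) (by omega) (hcont i)

lemma key_s4 [Nonempty (Fin m)] (hp : ∀ i j, 0 ≤ p i j) {k : ℕ}
    {D F : Fin m → ℝ} {a n : ℕ} (hplay : Play p k D a n F) (hD : ∀ i, 0 ≤ D i) :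
    maxLoad F - maxLoad D ≤ (∑ j ∈ Finset.Icc a n, pmin p j)
      + ∑ j ∈ Finset.Icc a n, deltaL p k (j + 1) (min (j + k) n) := by
  induction hplay with
  | nil D a b h =>
    rw [Finset.Icc_eq_empty (by omega : ¬ a ≤ b)]; simp
  | cons D a b i F hab hroot hplay ih =>
    have hD' : ∀ i', 0 ≤ bump p D i a i' := fun i' => (hD i').trans (le_bump hp D i a i')
    have IH := ih hD'
    -- key bound on the bumped load
    obtain ⟨cont, hcont, hopt⟩ := hroot
    obtain ⟨i', hi'⟩ := Finite.exists_min (fun i0 => p i0 a)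
    have hpm : p i' a ≤ pmin p a := le_ciInf hi'
    have h1 : D i + p i a ≤ cont i i := by
      have := out_mono hp (hcont i) i
      simpa [bump] using this
    have h2 : cont i i ≤ cont i' i' := hopt i'
    have h3 : cont i' i' ≤ maxLoad (cont i') := le_maxLoad _ _
    have h4 : Play p k (bump p D i' a) (a + 1) (min (a + k) b) (cont i') :=
      out_to_play _ (a + 1) (min (a + k) b) _ _ (by omega) (by omega) (hcont i')
    have h5 : maxLoad (cont i') - maxLoad (bump p D i' a)
        ≤ deltaL p k (a + 1) (min (a + k) b) :=
      le_csSup (deltaL_bddAbove hp _ _ _)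
        ⟨bump p D i' a, cont i', fun i0 => (hD i0).trans (le_bump hp D i' a i0), h4, rfl⟩
    have h6 : maxLoad (bump p D i' a) ≤ maxLoad D + pmin p a :=
      maxLoad_bump_le hp D i' a hpm ((hp i' a).trans hpm)
    have hbump : maxLoad (bump p D i a)
        ≤ maxLoad D + pmin p a + deltaL p k (a + 1) (min (a + k) b) := by
      refine maxLoad_le fun i0 => ?_
      by_cases hi0 : i0 = i
      · subst hi0
        have : bump p D i0 a i0 = D i0 + p i0 a := by simp [bump]
        rw [this]
        linarith
      · have heq : bump p D i a i0 = D i0 := by simp [bump, hi0]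
        rw [heq]
        have := le_maxLoad D i0
        have := pmin_nonneg hp a
        have := deltaL_nonneg hp k (a + 1) (min (a + k) b)
        linarith
    -- split the sums
    have hs1 : ∑ j ∈ Finset.Icc a b, pmin p j
        = pmin p a + ∑ j ∈ Finset.Icc (a + 1) b, pmin p j := by
      rw [Finset.Icc_eq_cons_Ioc hab, Finset.sum_cons, ← Finset.Icc_add_one_left_eq_Ioc]
    have hs2 : ∑ j ∈ Finset.Icc a b, deltaL p k (j + 1) (min (j + k) b)
        = deltaL p k (a + 1) (min (a + k) b)
          + ∑ j ∈ Finset.Icc (a + 1) b, deltaL p k (j + 1) (min (j + k) b) := by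
      rw [Finset.Icc_eq_cons_Ioc hab, Finset.sum_cons, ← Finset.Icc_add_one_left_eq_Ioc]
    rw [hs1, hs2]
    linarith
end Aux


/-- For jobs `1, …, n` with `k`-lookahead,
`ΔL([1:n]) ≤ Σ_{j=1}^n p_j + Σ_{j=1}^n ΔL(K_j)`, where `K_j = [j+1 : min (j+k) n]`
is the lookahead set of job `j` and `p_j` its minimum processing time. -/
theorem deltaL_le_sum_pmin_add_sum_deltaL (m k n : ℕ) (hm : 0 < m)
    (p : Fin m → ℕ → ℝ) (hp : ∀ i j, 0 ≤ p i j) :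
    deltaL p k 1 n ≤
      (∑ j ∈ Finset.Icc 1 n, pmin p j) +
        ∑ j ∈ Finset.Icc 1 n, deltaL p k (j + 1) (min (j + k) n) := by
  haveI : Nonempty (Fin m) := ⟨⟨0, hm⟩⟩
  have hrhs : 0 ≤ (∑ j ∈ Finset.Icc 1 n, pmin p j) +
      ∑ j ∈ Finset.Icc 1 n, deltaL p k (j + 1) (min (j + k) n) :=
    add_nonneg (Finset.sum_nonneg fun j _ => pmin_nonneg hp j)
      (Finset.sum_nonneg fun j _ => deltaL_nonneg hp k _ _)
  refine Real.sSup_le ?_ hrhs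
  rintro x ⟨D, F, hD, hP, rfl⟩
  exact key_s4 hp hP hD
end
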